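/- arXiv:2507.19630 — 6 statements merged into one kernel-verified Lean document; each statement's English description precedes it below -/
import Mathlib

section
/- Graded Context Rule: in any graded equational theory E over a Lawverean quantale, for all terms u, v, t, degree ε, and position p of t, if ε ⊩ u =_E v is derivable then ∂_p(t)(ε) ⊩ t[u]_p =_E t[v]_p is derivable. -/
/-! Graded terms over a `Φ`-graded signature: each function symbol carries a modal arity,
a list of quantale endomorphisms (one per argument). -/

/-- A graded signature: function symbols together with their modal arities,
lists of maps `Ω → Ω` (intended to be quantale endomorphisms, CBEs). -/
structure GradedSig (Ω : Type*) where
  Sym : Type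
  arity : Sym → List (Ω → Ω)

/-- First-order terms over a graded signature, with variables indexed by `ℕ`. -/
inductive GTerm {Ω : Type*} (F : GradedSig Ω) : Type
  | var : ℕ → GTerm F
  | app : (f : F.Sym) → (Fin (F.arity f).length → GTerm F) → GTerm F

namespace GTerm

variable {Ω : Type*} {F : GradedSig Ω}

/-- The subterm of `t` at position `p` (`none` if `p` is not a position of `t`). -/
def subtermAt : GTerm F → List ℕ → Option (GTerm F)
  | t, [] => some t
  | var _, _ :: _ => none
  | app f args, i :: p =>
      if h : i < (F.arity f).length then subtermAt (args ⟨i, h⟩) p else none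

/-- `replaceAt t p u` is `t[u]_p`, the replacement of the subterm of `t` at `p` by `u`
(returning `t` unchanged on the illegal cases). -/
def replaceAt : GTerm F → List ℕ → GTerm F → GTerm F
  | _, [], u => u
  | var v, _ :: _, _ => var v
  | app f args, i :: p, u =>
      app f (fun j => if (j : ℕ) = i then replaceAt (args j) p u else args j)

/-- The grade `∂_p(t)` of position `p` in term `t`: the composition of the modal grades
along `p`, with `∂_λ(t) = id` and `∂_{i.p}(f(t₁,…,tₙ)) = φᵢ ∘ ∂_p(tᵢ)`. -/
def gradeAt : GTerm F → List ℕ → (Ω → Ω)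
  | _, [] => id
  | var _, _ :: _ => id
  | app f args, i :: p =>
      if h : i < (F.arity f).length then
        ((F.arity f).get ⟨i, h⟩) ∘ gradeAt (args ⟨i, h⟩) p
      else id

/-- Application of a substitution `σ : ℕ → GTerm F` to a term. -/
def subst (σ : ℕ → GTerm F) : GTerm F → GTerm F
  | var v => σ v
  | app f args => app f (fun j => subst σ (args j))

/-- The set of variables of a term. -/
def vars : GTerm F → Set ℕ
  | var v => {v}
  | app _ args => ⋃ j, vars (args j)

/-- The set of positions of a term. -/
def Pos (t : GTerm F) : Set (List ℕ) := {p | (subtermAt t p).isSome}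

/-- The set of non-variable (function symbol) positions of a term. -/
def FunPos (t : GTerm F) : Set (List ℕ) :=
  {p | ∃ f args, subtermAt t p = some (app f args)}

/-- A term is linear if no variable occurs at two distinct positions. -/
def Linear (t : GTerm F) : Prop :=
  ∀ v p q, subtermAt t p = some (var v) → subtermAt t q = some (var v) → p = q

end GTerm

/-- A quantale endomorphism (change-of-base endofunctor, CBE): a monotone map preserving
the unit, the tensor, and arbitrary joins. -/
def IsCBE {Ω : Type*} [Monoid Ω] [CompleteLattice Ω] (φ : Ω → Ω) : Prop :=
  Monotone φ ∧ φ 1 = 1 ∧ (∀ a b : Ω, φ (a * b) = φ a * φ b) ∧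
    ∀ s : Set Ω, φ (sSup s) = sSup (φ '' s)

/-- A `Φ`-graded signature is one whose modal arities consist of CBEs. -/
def GradedSig.IsCBESig {Ω : Type*} [Monoid Ω] [CompleteLattice Ω] (F : GradedSig Ω) : Prop :=
  ∀ f : F.Sym, ∀ φ ∈ F.arity f, IsCBE φ

/-- A (commutative unital) quantale is Lawverean if it is integral (`κ = ⊤`),
cointegral (`ε ⊗ δ = ⊥` implies `ε = ⊥` or `δ = ⊥`), and nontrivial (`κ ≠ ⊥`). -/
def Lawverean (Ω : Type*) [CommMonoid Ω] [CompleteLattice Ω] : Prop :=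
  (1 : Ω) = ⊤ ∧ (∀ a b : Ω, a * b = ⊥ → a = ⊥ ∨ b = ⊥) ∧ (1 : Ω) ≠ ⊥
/-- The graded quantitative equational theory `=_E` generated by a set `E` of
`Ω`-equalities `(t, ε, s)`, closed under the rules (Ax), (Refl), (Sym), (Trans),
(Ampl), (Subst), (Ord), and (Join). -/
inductive EqDeriv {Ω : Type*} [CommMonoid Ω] [CompleteLattice Ω] (F : GradedSig Ω)
    (E : Set (GTerm F × Ω × GTerm F)) : Ω → GTerm F → GTerm F → Prop
  | ax {t ε s} : (t, ε, s) ∈ E → EqDeriv F E ε t s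
  | refl (t) : EqDeriv F E 1 t t
  | symm {ε t s} : EqDeriv F E ε t s → EqDeriv F E ε s t
  | trans {ε δ t s r} : EqDeriv F E ε t s → EqDeriv F E δ s r → EqDeriv F E (ε * δ) t r
  | ampl (f : F.Sym) (ts ss : Fin (F.arity f).length → GTerm F)
      (εs : Fin (F.arity f).length → Ω) :
      (∀ j, EqDeriv F E (εs j) (ts j) (ss j)) →
      EqDeriv F E (List.ofFn (fun j => (F.arity f).get j (εs j))).prod
        (GTerm.app f ts) (GTerm.app f ss)
  | subst {ε t s} (σ : ℕ → GTerm F) :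
      EqDeriv F E ε t s → EqDeriv F E ε (t.subst σ) (s.subst σ)
  | ord {ε δ t s} : EqDeriv F E ε t s → δ ≤ ε → EqDeriv F E δ t s
  | join {ε δ t s} : EqDeriv F E ε t s → EqDeriv F E δ t s → EqDeriv F E (ε ⊔ δ) t s

/-- Graded Context Rule: in a graded equational theory `E` over a Lawverean quantale,
if `ε ⊩ u =_E v` is derivable, then `∂_p(t)(ε) ⊩ t[u]_p =_E t[v]_p` is derivable for any
term `t` and position `p` of `t`. -/
theorem graded_context_rule {Ω : Type*} [CommMonoid Ω] [CompleteLattice Ω] [IsQuantale Ω]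
    (hΩ : Lawverean Ω) {F : GradedSig Ω} (hF : F.IsCBESig)
    (E : Set (GTerm F × Ω × GTerm F)) {u v t : GTerm F} {ε : Ω} {p : List ℕ}
    (hp : p ∈ GTerm.Pos t) (h : EqDeriv F E ε u v) :
    EqDeriv F E (GTerm.gradeAt t p ε) (GTerm.replaceAt t p u) (GTerm.replaceAt t p v) := by
  induction t generalizing p with
  | var w =>
    cases p with
    | nil => simpa [GTerm.gradeAt, GTerm.replaceAt] using h
    | cons i q =>
      exact absurd hp (by simp [GTerm.Pos, GTerm.subtermAt])
  | app f args ih =>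
    cases p with
    | nil => simpa [GTerm.gradeAt, GTerm.replaceAt] using h
    | cons i q =>
      simp only [GTerm.Pos, GTerm.subtermAt, Set.mem_setOf_eq] at hp
      by_cases hi : i < (F.arity f).length
      · simp only [hi, dif_pos] at hp
        have ihd := ih ⟨i, hi⟩ (p := q) hp
        set δ : Ω := GTerm.gradeAt (args ⟨i, hi⟩) q ε with hδ
        -- set up the amplification
        set εs : Fin (F.arity f).length → Ω :=
          fun j => if (j : ℕ) = i then δ else 1 with hεs
        have hder : ∀ j, EqDeriv F E (εs j)
            (if (j : ℕ) = i then GTerm.replaceAt (args j) q u else args j)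
            (if (j : ℕ) = i then GTerm.replaceAt (args j) q v else args j) := by
          intro j
          by_cases hj : (j : ℕ) = i
          · have : j = ⟨i, hi⟩ := Fin.ext hj
            subst this
            simpa [hεs, hj] using ihd
          · simpa [hεs, hj] using EqDeriv.refl (E := E)
              (if (j : ℕ) = i then GTerm.replaceAt (args j) q u else args j)
        have hamp := EqDeriv.ampl f
          (fun j => if (j : ℕ) = i then GTerm.replaceAt (args j) q u else args j)
          (fun j => if (j : ℕ) = i then GTerm.replaceAt (args j) q v else args j)
          εs hder
        have hprod : (List.ofFn (fun j => (F.arity f).get j (εs j))).prod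
            = (F.arity f).get ⟨i, hi⟩ δ := by
          rw [List.prod_ofFn]
          have h1 : ∀ j : Fin (F.arity f).length, j ≠ ⟨i, hi⟩ →
              (F.arity f).get j (εs j) = 1 := by
            intro j hj
            have hji : (j : ℕ) ≠ i := fun hc => hj (Fin.ext hc)
            have : εs j = 1 := by simp [hεs, hji]
            rw [this]
            exact (hF f _ (by exact (F.arity f).get_mem j)).2.1
          rw [Finset.prod_eq_single ⟨i, hi⟩ (fun j _ hj => h1 j hj)
            (fun hc => absurd (Finset.mem_univ _) hc)]
          simp [hεs]
        rw [hprod] at hamp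
        have hgr : GTerm.gradeAt (GTerm.app f args) (i :: q)
            = (F.arity f).get ⟨i, hi⟩ ∘ GTerm.gradeAt (args ⟨i, hi⟩) q := by
          simp [GTerm.gradeAt, hi]
        rw [hgr]
        simpa [GTerm.replaceAt] using hamp
      · simp only [hi, dif_neg, not_false_iff] at hp
        exact absurd hp (by simp)
end

section
/- If κ ⊩ u =_E v is derivable in a graded equational theory E over a Lawverean quantale, then κ ⊩ t[u]_p =_E t[v]_p is derivable for any term t and position p of t. -/
/-- If `κ ⊩ u =_E v` is derivable in a graded equational theory `E` over a Lawverean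
quantale, then `κ ⊩ t[u]_p =_E t[v]_p` is derivable for any term `t` and position `p`
of `t`. -/
theorem graded_replacement_in_context {Ω : Type*} [CommMonoid Ω] [CompleteLattice Ω]
    [IsQuantale Ω] (hΩ : Lawverean Ω) {F : GradedSig Ω} (hF : F.IsCBESig)
    (E : Set (GTerm F × Ω × GTerm F)) {u v t : GTerm F} {p : List ℕ}
    (hp : p ∈ GTerm.Pos t) (h : EqDeriv F E 1 u v) :
    EqDeriv F E 1 (GTerm.replaceAt t p u) (GTerm.replaceAt t p v) := by
  clear hp hΩ
  induction t generalizing u v p with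
  | var w =>
    cases p with
    | nil => exact h
    | cons i q => exact EqDeriv.refl _
  | app f args ih =>
    cases p with
    | nil => exact h
    | cons i q =>
      show EqDeriv F E 1 (GTerm.app f _) (GTerm.app f _)
      have key := EqDeriv.ampl (E := E) f
        (fun j => if (j : ℕ) = i then GTerm.replaceAt (args j) q u else args j)
        (fun j => if (j : ℕ) = i then GTerm.replaceAt (args j) q v else args j)
        (fun _ => (1 : Ω)) (fun j => by
          by_cases hji : (j : ℕ) = i
          · simp only [hji, if_pos rfl]; exact ih j (h := h) (p := q)
          · simp only [if_neg hji]; exact EqDeriv.refl _)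
      have hone : (List.ofFn (fun j => (F.arity f).get j (1 : Ω))).prod = 1 := by
        apply List.prod_eq_one
        intro x hx
        rw [List.mem_ofFn] at hx
        obtain ⟨j, rfl⟩ := hx
        exact (hF f _ (List.get_mem _ j)).2.1
      rw [hone] at key
      exact key
end

section
/- Soundness of rewriting for graded equational theories: if t ↔*_{R,ε} s (t and s are (R,ε)-convertible) in an (Ω,Φ)-term rewriting system R, then ε ⊩ t =_R s is derivable in the graded equational theory generated by R. -/
/-- An `(Ω,Φ)`-term rewriting system: every rule `ε ⊩ l ↦ r` has a non-variable
left-hand side and `Var(r) ⊆ Var(l)`. -/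
def IsTRS {Ω : Type*} {F : GradedSig Ω} (R : Set (GTerm F × Ω × GTerm F)) : Prop :=
  ∀ l ε r, (l, ε, r) ∈ R → (∀ v, l ≠ GTerm.var v) ∧ GTerm.vars r ⊆ GTerm.vars l

/-- One-step graded rewriting: from a rule `δ ⊩ l ↦ r` infer
`∂_p(t)(δ) ⊩ t = t[lσ]_p → t[rσ]_p`. -/
def Rew {Ω : Type*} {F : GradedSig Ω} (R : Set (GTerm F × Ω × GTerm F))
    (ε : Ω) (t s : GTerm F) : Prop :=
  ∃ (l : GTerm F) (δ : Ω) (r : GTerm F) (σ : ℕ → GTerm F) (p : List ℕ), (l, δ, r) ∈ R ∧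
    GTerm.subtermAt t p = some (GTerm.subst σ l) ∧
    s = GTerm.replaceAt t p (GTerm.subst σ r) ∧
    ε = GTerm.gradeAt t p δ

/-- Graded reflexive-transitive closure of the symmetric rewrite relation
`↔_R = →_R ∪ ←_R`, combining degrees of consecutive steps by `⊗`
(with the unit `κ` for zero steps): graded convertibility `t ↔*_{R,ε} s`. -/
inductive ConvStar {Ω : Type*} [Monoid Ω] {F : GradedSig Ω}
    (R : Set (GTerm F × Ω × GTerm F)) : Ω → GTerm F → GTerm F → Prop
  | refl (t) : ConvStar R 1 t t
  | step {ε δ t u s} : (Rew R ε t u ∨ Rew R ε u t) → ConvStar R δ u s →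
      ConvStar R (ε * δ) t s

/-- Graded multi-step rewriting `t →*_{R,ε} s`, combining degrees by `⊗`. -/
inductive RewStar {Ω : Type*} [Monoid Ω] {F : GradedSig Ω}
    (R : Set (GTerm F × Ω × GTerm F)) : Ω → GTerm F → GTerm F → Prop
  | refl (t) : RewStar R 1 t t
  | step {ε δ t u s} : Rew R ε t u → RewStar R δ u s → RewStar R (ε * δ) t s

lemma eqDeriv_context {Ω : Type*} [CommMonoid Ω] [CompleteLattice Ω] {F : GradedSig Ω}
    (hF : F.IsCBESig) (R : Set (GTerm F × Ω × GTerm F)) :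
    ∀ (p : List ℕ) (t u u' : GTerm F) (ε : Ω),
      GTerm.subtermAt t p = some u → EqDeriv F R ε u u' →
      EqDeriv F R (GTerm.gradeAt t p ε) t (GTerm.replaceAt t p u') := by
  intro p
  induction p with
  | nil =>
      intro t u u' ε hsub hd
      simp only [GTerm.subtermAt, Option.some.injEq] at hsub
      subst hsub
      simpa [GTerm.gradeAt, GTerm.replaceAt] using hd
  | cons i q ih =>
      intro t u u' ε hsub hd
      cases t with
      | var v => simp [GTerm.subtermAt] at hsub
      | app f args =>
          simp only [GTerm.subtermAt] at hsub
          split at hsub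
          · rename_i h
            have IH := ih (args ⟨i, h⟩) u u' ε hsub hd
            have hampl := EqDeriv.ampl (E := R) f args
              (fun j => if (j : ℕ) = i then GTerm.replaceAt (args j) q u' else args j)
              (fun j => if (j : ℕ) = i then GTerm.gradeAt (args ⟨i, h⟩) q ε else 1)
              (by
                intro j
                by_cases hj : (j : ℕ) = i
                · have : j = ⟨i, h⟩ := Fin.ext hj
                  subst this
                  simpa [hj] using IH
                · simpa [hj] using EqDeriv.refl (E := R) (args j))
            have hprod :
                (List.ofFn (fun j : Fin (F.arity f).length =>
                  (F.arity f).get j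
                    (if (j : ℕ) = i then GTerm.gradeAt (args ⟨i, h⟩) q ε else 1))).prod
                = (F.arity f).get ⟨i, h⟩ (GTerm.gradeAt (args ⟨i, h⟩) q ε) := by
              rw [List.prod_ofFn]
              rw [Finset.prod_eq_single (⟨i, h⟩ : Fin (F.arity f).length)]
              · simp
              · intro j _ hj
                have hj' : (j : ℕ) ≠ i := by
                  intro hc; exact hj (Fin.ext hc)
                simp only [hj', if_false]
                exact (hF f _ (List.getElem_mem _)).2.1
              · simp
            rw [hprod] at hampl
            simpa [GTerm.gradeAt, GTerm.replaceAt, h] using hampl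
          · exact absurd hsub (by simp)

lemma eqDeriv_of_rew {Ω : Type*} [CommMonoid Ω] [CompleteLattice Ω] {F : GradedSig Ω}
    (hF : F.IsCBESig) {R : Set (GTerm F × Ω × GTerm F)} {ε : Ω} {t s : GTerm F}
    (h : Rew R ε t s) : EqDeriv F R ε t s := by
  obtain ⟨l, δ, r, σ, p, hmem, hsub, hs, hε⟩ := h
  subst hs; subst hε
  exact eqDeriv_context hF R p t _ _ δ hsub (EqDeriv.subst σ (EqDeriv.ax hmem))

/-- Soundness of rewriting for graded equational theories: if `t ↔*_{R,ε} s` in an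
`(Ω,Φ)`-TRS `R`, then `ε ⊩ t =_R s` is derivable in the graded equational theory
generated by `R`. -/
theorem graded_rewriting_sound {Ω : Type*} [CommMonoid Ω] [CompleteLattice Ω] [IsQuantale Ω]
    (hΩ : Lawverean Ω) {F : GradedSig Ω} (hF : F.IsCBESig)
    (R : Set (GTerm F × Ω × GTerm F)) (hR : IsTRS R) {ε : Ω} {t s : GTerm F}
    (h : ConvStar R ε t s) : EqDeriv F R ε t s := by
  induction h with
  | refl t => exact EqDeriv.refl t
  | step hstep _ ih =>
      refine EqDeriv.trans ?_ ih
      rcases hstep with h' | h'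
      · exact eqDeriv_of_rew hF h'
      · exact EqDeriv.symm (eqDeriv_of_rew hF h')
end

section
/- Completeness of rewriting for graded equational theories: if ε ⊩ t =_R s is derivable in the graded equational theory generated by an (Ω,Φ)-TRS R, then there exist finitely many degrees δ₁,…,δₙ with δ₁ ∨ … ∨ δₙ ≽ ε such that t ↔*_{R,δᵢ} s holds for each i. -/
section Aux

variable {Ω : Type*} {F : GradedSig Ω}

open GTerm Function

theorem aux_subtermAt_nil (t : GTerm F) : subtermAt t [] = some t := by cases t <;> rfl

theorem aux_replaceAt_nil (t u : GTerm F) : replaceAt t [] u = u := by cases t <;> rfl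

theorem aux_gradeAt_nil (t : GTerm F) : gradeAt (Ω := Ω) t [] = id := by cases t <;> rfl

theorem aux_subst_subst (σ τ : ℕ → GTerm F) (t : GTerm F) :
    (t.subst τ).subst σ = t.subst fun v => (τ v).subst σ := by
  induction t with
  | var v => rfl
  | app f args ih => simp only [GTerm.subst]; exact congrArg _ (funext fun j => ih j)

theorem aux_subst_var (t : GTerm F) : t.subst GTerm.var = t := by
  induction t with
  | var v => rfl
  | app f args ih => simp only [GTerm.subst]; exact congrArg _ (funext fun j => ih j)

theorem aux_subtermAt_subst (σ : ℕ → GTerm F) :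
    ∀ (t : GTerm F) (p : List ℕ) (u : GTerm F), subtermAt t p = some u →
      subtermAt (t.subst σ) p = some (u.subst σ) := by
  intro t
  induction t with
  | var v =>
    intro p u h
    cases p with
    | nil => rw [aux_subtermAt_nil] at h ⊢; cases h; rfl
    | cons i p => simp [subtermAt] at h
  | app f args ih =>
    intro p u h
    cases p with
    | nil => rw [aux_subtermAt_nil] at h ⊢; cases h; rfl
    | cons i p =>
      simp only [subtermAt] at h ⊢
      split at h
      · next hi =>
        show subtermAt (GTerm.app f fun j => (args j).subst σ) (i :: p) = _
        simp only [subtermAt]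
        rw [dif_pos hi]
        exact ih _ p u h
      · exact absurd h (by simp)

theorem aux_replaceAt_subst (σ : ℕ → GTerm F) :
    ∀ (t : GTerm F) (p : List ℕ) (w : GTerm F), subtermAt t p = some w →
      ∀ u, (replaceAt t p u).subst σ = replaceAt (t.subst σ) p (u.subst σ) := by
  intro t
  induction t with
  | var v =>
    intro p w h u
    cases p with
    | nil => rw [aux_replaceAt_nil, aux_replaceAt_nil]
    | cons i p => simp [subtermAt] at h
  | app f args ih =>
    intro p w h u
    cases p with
    | nil => rw [aux_replaceAt_nil, aux_replaceAt_nil]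
    | cons i p =>
      simp only [subtermAt] at h
      split at h
      · next hi =>
        show _ = replaceAt (GTerm.app f fun j => (args j).subst σ) (i :: p) (u.subst σ)
        simp only [replaceAt, GTerm.subst]
        congr 1
        funext k
        by_cases hk : (k : ℕ) = i
        · rw [if_pos hk, if_pos hk]
          have hj : k = ⟨i, hi⟩ := Fin.ext hk
          exact ih k p w (by rw [hj]; exact h) u
        · rw [if_neg hk, if_neg hk]
      · exact absurd h (by simp)

theorem aux_gradeAt_subst (σ : ℕ → GTerm F) :
    ∀ (t : GTerm F) (p : List ℕ) (w : GTerm F), subtermAt t p = some w →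
      gradeAt (Ω := Ω) (t.subst σ) p = gradeAt t p := by
  intro t
  induction t with
  | var v =>
    intro p w h
    cases p with
    | nil => rw [aux_gradeAt_nil, aux_gradeAt_nil]
    | cons i p => simp [subtermAt] at h
  | app f args ih =>
    intro p w h
    cases p with
    | nil => rw [aux_gradeAt_nil, aux_gradeAt_nil]
    | cons i p =>
      simp only [subtermAt] at h
      split at h
      · next hi =>
        show gradeAt (GTerm.app f fun j => (args j).subst σ) (i :: p) = _
        simp only [gradeAt]
        rw [dif_pos hi, dif_pos hi, ih _ p w h]
      · exact absurd h (by simp)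

theorem aux_rew_subst {R : Set (GTerm F × Ω × GTerm F)} (σ : ℕ → GTerm F) {ε : Ω}
    {t s : GTerm F} (h : Rew R ε t s) : Rew R ε (t.subst σ) (s.subst σ) := by
  obtain ⟨l, δ, r, τ, p, hm, hsub, hrep, hgr⟩ := h
  refine ⟨l, δ, r, fun v => (τ v).subst σ, p, hm, ?_, ?_, ?_⟩
  · rw [← aux_subst_subst]; exact aux_subtermAt_subst σ t p _ hsub
  · rw [hrep, aux_replaceAt_subst σ t p _ hsub, aux_subst_subst]
  · rw [aux_gradeAt_subst σ t p _ hsub]; exact hgr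

theorem aux_rew_app {R : Set (GTerm F × Ω × GTerm F)} {f : F.Sym}
    (args : Fin (F.arity f).length → GTerm F) (j : Fin (F.arity f).length)
    {ε : Ω} {u v : GTerm F} (h : Rew R ε u v) :
    Rew R ((F.arity f).get j ε)
      (GTerm.app f (Function.update args j u)) (GTerm.app f (Function.update args j v)) := by
  obtain ⟨l, δ, r, τ, p, hm, hsub, hrep, hgr⟩ := h
  refine ⟨l, δ, r, τ, (j : ℕ) :: p, hm, ?_, ?_, ?_⟩
  · simp only [subtermAt]
    rw [dif_pos j.isLt]
    simpa [Fin.eta, Function.update_self] using hsub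
  · simp only [replaceAt]
    congr 1
    funext k
    by_cases hk : (k : ℕ) = (j : ℕ)
    · have hj : k = j := Fin.ext hk
      subst hj
      rw [if_pos hk, Function.update_self, Function.update_self, hrep]
    · have hj : k ≠ j := fun hc => hk (by rw [hc])
      rw [if_neg hk, Function.update_of_ne hj, Function.update_of_ne hj]
  · simp only [gradeAt]
    rw [dif_pos j.isLt]
    simp only [Fin.eta, Function.update_self, Function.comp_apply]
    rw [← hgr]

end Aux

section AuxConv

variable {Ω : Type*} [CommMonoid Ω] {F : GradedSig Ω} {R : Set (GTerm F × Ω × GTerm F)}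

open GTerm Function

theorem aux_conv_append {ε δ : Ω} {t u s : GTerm F} (h1 : ConvStar R ε t u) :
    ConvStar R δ u s → ConvStar R (ε * δ) t s := by
  induction h1 with
  | refl t => intro h2; rwa [one_mul]
  | step h _ ih => intro h2; rw [mul_assoc]; exact ConvStar.step h (ih h2)

theorem aux_conv_single {ε : Ω} {t s : GTerm F} (h : Rew R ε t s ∨ Rew R ε s t) :
    ConvStar R ε t s :=
  mul_one ε ▸ ConvStar.step h (ConvStar.refl s)

theorem aux_conv_symm {ε : Ω} {t s : GTerm F} (h : ConvStar R ε t s) : ConvStar R ε s t := by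
  induction h with
  | refl t => exact ConvStar.refl t
  | step h _ ih => rw [mul_comm]; exact aux_conv_append ih (aux_conv_single h.symm)

theorem aux_conv_subst {ε : Ω} {t s : GTerm F} (σ : ℕ → GTerm F) (h : ConvStar R ε t s) :
    ConvStar R ε (t.subst σ) (s.subst σ) := by
  induction h with
  | refl t => exact ConvStar.refl _
  | step h _ ih => exact ConvStar.step (h.imp (aux_rew_subst σ) (aux_rew_subst σ)) ih

theorem aux_conv_app [CompleteLattice Ω] {f : F.Sym}
    (args : Fin (F.arity f).length → GTerm F) (j : Fin (F.arity f).length)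
    (hφ : IsCBE ((F.arity f).get j)) {ε : Ω} {u v : GTerm F} (h : ConvStar R ε u v) :
    ConvStar R ((F.arity f).get j ε)
      (GTerm.app f (Function.update args j u)) (GTerm.app f (Function.update args j v)) := by
  induction h with
  | refl t => rw [hφ.2.1]; exact ConvStar.refl _
  | step h _ ih =>
    rw [hφ.2.2.1]
    exact ConvStar.step (h.imp (aux_rew_app args j) (aux_rew_app args j)) ih

end AuxConv

section AuxGoodSec

variable {Ω : Type*} [CommMonoid Ω] [CompleteLattice Ω] [IsQuantale Ω] {F : GradedSig Ω}

open GTerm Function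

/-- The conclusion of the completeness theorem, as a predicate. -/
def AuxGood (R : Set (GTerm F × Ω × GTerm F)) (ε : Ω) (t s : GTerm F) : Prop :=
  ∃ (n : ℕ) (δ : Fin n → Ω), ε ≤ ⨆ i, δ i ∧ ∀ i, ConvStar R (δ i) t s

variable {R : Set (GTerm F × Ω × GTerm F)}

theorem aux_good_single {ε : Ω} {t s : GTerm F} (h : ConvStar R ε t s) : AuxGood R ε t s :=
  ⟨1, fun _ => ε, le_iSup (fun _ : Fin 1 => ε) 0, fun _ => h⟩

theorem aux_good_mono {ε δ : Ω} {t s : GTerm F} (h : δ ≤ ε) (hg : AuxGood R ε t s) :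
    AuxGood R δ t s := by
  obtain ⟨n, a, ha, hc⟩ := hg
  exact ⟨n, a, le_trans h ha, hc⟩

theorem aux_good_symm {ε : Ω} {t s : GTerm F} (hg : AuxGood R ε t s) : AuxGood R ε s t := by
  obtain ⟨n, a, ha, hc⟩ := hg
  exact ⟨n, a, ha, fun i => aux_conv_symm (hc i)⟩

theorem aux_good_subst {ε : Ω} {t s : GTerm F} (σ : ℕ → GTerm F) (hg : AuxGood R ε t s) :
    AuxGood R ε (t.subst σ) (s.subst σ) := by
  obtain ⟨n, a, ha, hc⟩ := hg
  exact ⟨n, a, ha, fun i => aux_conv_subst σ (hc i)⟩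

theorem aux_good_trans {ε δ : Ω} {t s r : GTerm F} (h1 : AuxGood R ε t s)
    (h2 : AuxGood R δ s r) : AuxGood R (ε * δ) t r := by
  obtain ⟨n, a, ha, hca⟩ := h1
  obtain ⟨m, b, hb, hcb⟩ := h2
  refine ⟨n * m, fun k => a (finProdFinEquiv.symm k).1 * b (finProdFinEquiv.symm k).2, ?_, ?_⟩
  · calc ε * δ ≤ (⨆ i, a i) * ⨆ i, b i := mul_le_mul' ha hb
      _ = ⨆ i, ⨆ j, a i * b j := by
          rw [Quantale.iSup_mul_distrib]
          exact iSup_congr fun i => Quantale.mul_iSup_distrib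
      _ = ⨆ p : Fin n × Fin m, a p.1 * b p.2 :=
          (iSup_prod (f := fun p : Fin n × Fin m => a p.1 * b p.2)).symm
      _ = _ := (finProdFinEquiv.symm.surjective.iSup_comp
          (g := fun p : Fin n × Fin m => a p.1 * b p.2)).symm
  · intro k
    exact aux_conv_append (hca _) (hcb _)

theorem aux_good_join {ε δ : Ω} {t s : GTerm F} (h1 : AuxGood R ε t s)
    (h2 : AuxGood R δ t s) : AuxGood R (ε ⊔ δ) t s := by
  obtain ⟨n, a, ha, hca⟩ := h1
  obtain ⟨m, b, hb, hcb⟩ := h2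
  refine ⟨n + m, fun k => Sum.elim a b (finSumFinEquiv.symm k), ?_, ?_⟩
  · rw [finSumFinEquiv.symm.surjective.iSup_comp (g := Sum.elim a b), iSup_sum]
    exact sup_le_sup ha hb
  · intro k
    rcases hk : finSumFinEquiv.symm k with i | i
    · simp only [hk, Sum.elim_inl]; exact hca i
    · simp only [hk, Sum.elim_inr]; exact hcb i

theorem aux_good_app {f : F.Sym} (args : Fin (F.arity f).length → GTerm F)
    (j : Fin (F.arity f).length) (hφ : IsCBE ((F.arity f).get j)) {ε : Ω} {u v : GTerm F}
    (h : AuxGood R ε u v) :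
    AuxGood R ((F.arity f).get j ε)
      (GTerm.app f (Function.update args j u)) (GTerm.app f (Function.update args j v)) := by
  obtain ⟨n, a, ha, hc⟩ := h
  refine ⟨n, fun i => (F.arity f).get j (a i), ?_, fun i => aux_conv_app args j hφ (hc i)⟩
  calc (F.arity f).get j ε ≤ (F.arity f).get j (⨆ i, a i) := hφ.1 ha
    _ = ⨆ i, (F.arity f).get j (a i) := by
        rw [iSup, hφ.2.2.2, ← Set.range_comp]; rfl

end AuxGoodSec

/-- Completeness of rewriting for graded equational theories: if `ε ⊩ t =_R s` is
derivable in the graded equational theory generated by an `(Ω,Φ)`-TRS `R`, then there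
exist finitely many degrees `δ₁,…,δₙ` with `δ₁ ∨ … ∨ δₙ ≽ ε` such that `t ↔*_{R,δᵢ} s`
for each `i`. -/
theorem graded_rewriting_complete {Ω : Type*} [CommMonoid Ω] [CompleteLattice Ω]
    [IsQuantale Ω] (hΩ : Lawverean Ω) {F : GradedSig Ω} (hF : F.IsCBESig)
    (R : Set (GTerm F × Ω × GTerm F)) (hR : IsTRS R) {ε : Ω} {t s : GTerm F}
    (h : EqDeriv F R ε t s) :
    ∃ (n : ℕ) (δ : Fin n → Ω), ε ≤ ⨆ i, δ i ∧ ∀ i, ConvStar R (δ i) t s := by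
  show AuxGood R ε t s
  induction h with
  | @ax t ε s hmem =>
    refine aux_good_single (aux_conv_single (Or.inl ?_))
    refine ⟨t, ε, s, GTerm.var, [], hmem, ?_, ?_, ?_⟩
    · rw [aux_subtermAt_nil, aux_subst_var]
    · rw [aux_replaceAt_nil, aux_subst_var]
    · rw [aux_gradeAt_nil]; rfl
  | refl t => exact aux_good_single (ConvStar.refl t)
  | symm _ ih => exact aux_good_symm ih
  | trans _ _ ih1 ih2 => exact aux_good_trans ih1 ih2
  | ampl f ts ss εs _ ih =>
    have key : ∀ S : Finset (Fin (F.arity f).length),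
        AuxGood R (∏ j ∈ S, (F.arity f).get j (εs j))
          (GTerm.app f fun k => if k ∈ S then ts k else ss k) (GTerm.app f ss) := by
      intro S
      induction S using Finset.induction with
      | empty =>
        simp only [Finset.notMem_empty, if_false, Finset.prod_empty]
        exact aux_good_single (ConvStar.refl _)
      | @insert j S hj IH =>
        rw [Finset.prod_insert hj]
        have hφ : IsCBE ((F.arity f).get j) :=
          hF f _ ((F.arity f).get_mem j)
        have h1 := aux_good_app (fun k => if k ∈ S then ts k else ss k) j hφ (ih j)
        have e1 : Function.update (fun k => if k ∈ S then ts k else ss k) j (ts j)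
            = fun k => if k ∈ insert j S then ts k else ss k := by
          funext k
          by_cases hk : k = j
          · subst hk; simp
          · simp [Function.update_of_ne hk, Finset.mem_insert, hk]
        have e2 : Function.update (fun k => if k ∈ S then ts k else ss k) j (ss j)
            = fun k => if k ∈ S then ts k else ss k := by
          funext k
          by_cases hk : k = j
          · subst hk; simp [hj]
          · simp [Function.update_of_ne hk]
        rw [e1, e2] at h1
        exact aux_good_trans h1 IH
    have := key Finset.univ
    simp only [Finset.mem_univ, if_true] at this
    rw [List.prod_ofFn]
    exact this
  | subst σ _ ih => exact aux_good_subst σ ih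
  | ord _ hle ih => exact aux_good_mono hle ih
  | join _ _ ih1 ih2 => exact aux_good_join ih1 ih2
end

section
/- Quantitative Church–Rosser: if R is a confluent (Ω,Φ)-TRS and t ↔*_{R,ε} s, then t and s are (R,δ)-joinable for some δ ≽ ε. -/
/-- `t` and `s` are `(R,δ)`-joinable: `t →*_{R,δ₁} r` and `s →*_{R,δ₂} r` with
`δ₁ ⊗ δ₂ = δ`. -/
def Joinable {Ω : Type*} [Monoid Ω] {F : GradedSig Ω}
    (R : Set (GTerm F × Ω × GTerm F)) (δ : Ω) (t s : GTerm F) : Prop :=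
  ∃ (δ₁ δ₂ : Ω) (r : GTerm F), RewStar R δ₁ t r ∧ RewStar R δ₂ s r ∧ δ₁ * δ₂ = δ

/-- `R` is confluent: whenever `t →*_{R,ε₁} s₁` and `t →*_{R,ε₂} s₂`, there exists
`δ ≽ ε₁ ⊗ ε₂` such that `s₁` and `s₂` are `(R,δ)`-joinable. -/
def Confluent {Ω : Type*} [Monoid Ω] [CompleteLattice Ω] {F : GradedSig Ω}
    (R : Set (GTerm F × Ω × GTerm F)) : Prop :=
  ∀ (ε₁ ε₂ : Ω) (t s₁ s₂ : GTerm F), RewStar R ε₁ t s₁ → RewStar R ε₂ t s₂ →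
    ∃ δ : Ω, ε₁ * ε₂ ≤ δ ∧ Joinable R δ s₁ s₂


theorem RewStar.trans' {Ω : Type*} [Monoid Ω] {F : GradedSig Ω}
    {R : Set (GTerm F × Ω × GTerm F)} {a b : Ω} {t u v : GTerm F}
    (h1 : RewStar R a t u) (h2 : RewStar R b u v) : RewStar R (a * b) t v := by
  induction h1 with
  | refl => simpa using h2
  | step hs _ ih => rw [mul_assoc]; exact RewStar.step hs (ih h2)

/-- Quantitative Church–Rosser: if `R` is a confluent `(Ω,Φ)`-TRS and `t ↔*_{R,ε} s`,
then `t` and `s` are `(R,δ)`-joinable for some `δ ≽ ε`. -/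
theorem quantitative_church_rosser {Ω : Type*} [CommMonoid Ω] [CompleteLattice Ω]
    [IsQuantale Ω] (hΩ : Lawverean Ω) {F : GradedSig Ω} (hF : F.IsCBESig)
    (R : Set (GTerm F × Ω × GTerm F)) (hR : IsTRS R) (hc : Confluent R)
    {ε : Ω} {t s : GTerm F} (h : ConvStar R ε t s) :
    ∃ δ : Ω, ε ≤ δ ∧ Joinable R δ t s := by
  induction h with
  | refl t => exact ⟨1, le_refl _, 1, 1, t, RewStar.refl t, RewStar.refl t, one_mul 1⟩
  | @step ε δ t u s hstep _ ih =>
    obtain ⟨δ', hδ', a, b, r, hur, hsr, hab⟩ := ih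
    rcases hstep with h1 | h1
    · refine ⟨ε * δ', mul_le_mul_right hδ' ε, ε * a, b, r, ?_, hsr, ?_⟩
      · exact RewStar.step h1 hur
      · rw [mul_assoc, hab]
    · -- u →_ε t and u →*_a r
      have hut : RewStar R ε u t := by
        have := RewStar.step h1 (RewStar.refl t)
        simpa using this
      obtain ⟨γ, hγ, c, d, w, htw, hrw, hcd⟩ := hc ε a u t r hut hur
      refine ⟨c * (b * d), ?_, c, b * d, w, htw, RewStar.trans' hsr hrw, rfl⟩
      calc ε * δ ≤ ε * δ' := mul_le_mul_right hδ' ε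
        _ = ε * (a * b) := by rw [hab]
        _ = (ε * a) * b := by rw [mul_assoc]
        _ ≤ γ * b := mul_le_mul_left hγ b
        _ = (c * d) * b := by rw [hcd]
        _ = c * (b * d) := by rw [mul_assoc, mul_comm d b]
end

section
/- If t is a linear term and R is a right-ground (Ω,Φ)-TRS (all right-hand sides of rules are ground), then every narrowing derivation starting from t is basic; equivalently, for every term tᵢ in the derivation, the set of basic positions of tᵢ equals its set of non-variable positions. -/
/-- `σ` is a (syntactic) unifier of `u` and `v`. -/
def IsUnifier {Ω : Type*} {F : GradedSig Ω} (σ : ℕ → GTerm F) (u v : GTerm F) : Prop :=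
  GTerm.subst σ u = GTerm.subst σ v

/-- `σ` is a most general (syntactic) unifier of `u` and `v`. -/
def IsMGU {Ω : Type*} {F : GradedSig Ω} (σ : ℕ → GTerm F) (u v : GTerm F) : Prop :=
  IsUnifier σ u v ∧
    ∀ τ : ℕ → GTerm F, IsUnifier τ u v →
      ∃ ρ : ℕ → GTerm F, ∀ x, GTerm.subst ρ (σ x) = τ x

/-- The substitution renaming variables along `π`. -/
def renameBy {Ω : Type*} {F : GradedSig Ω} (π : ℕ → ℕ) : ℕ → GTerm F :=
  fun v => GTerm.var (π v)

/-- The data of a single narrowing step: the position used, the (renamed-apart) rule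
`deg ⊩ lhs ↦ rhs`, and the most general unifier applied. -/
structure NStep (Ω : Type*) (F : GradedSig Ω) where
  pos : List ℕ
  lhs : GTerm F
  rhs : GTerm F
  deg : Ω
  mgu : ℕ → GTerm F

/-- Validity of a narrowing step `st` from term `t` with respect to `R`:
`st.pos` is a non-variable position of `t`; the rule `st.deg ⊩ st.lhs ↦ st.rhs` is a
renamed-apart variant of a rule of `R` sharing no variables with `t`; and `st.mgu` is a
most general syntactic unifier of `t|_{st.pos}` and `st.lhs`. -/
def StepOK {Ω : Type*} {F : GradedSig Ω} (R : Set (GTerm F × Ω × GTerm F))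
    (t : GTerm F) (st : NStep Ω F) : Prop :=
  st.pos ∈ GTerm.FunPos t ∧
  (∃ (l₀ r₀ : GTerm F) (π : ℕ → ℕ), Function.Injective π ∧ (l₀, st.deg, r₀) ∈ R ∧
    st.lhs = GTerm.subst (renameBy π) l₀ ∧ st.rhs = GTerm.subst (renameBy π) r₀ ∧
    (GTerm.vars st.lhs ∪ GTerm.vars st.rhs) ∩ GTerm.vars t = ∅) ∧
  (∃ u, GTerm.subtermAt t st.pos = some u ∧ IsMGU st.mgu u st.lhs)

/-- The result `(t[rhs]_p)σ` of a narrowing step. -/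
def nnext {Ω : Type*} {F : GradedSig Ω} (t : GTerm F) (st : NStep Ω F) : GTerm F :=
  GTerm.subst st.mgu (GTerm.replaceAt t st.pos st.rhs)

/-- Validity of a narrowing derivation from `t` given by a list of steps. -/
def ValidDeriv {Ω : Type*} {F : GradedSig Ω} (R : Set (GTerm F × Ω × GTerm F)) :
    GTerm F → List (NStep Ω F) → Prop
  | _, [] => True
  | t, st :: l => StepOK R t st ∧ ValidDeriv R (nnext t st) l

/-- One step of the evolution of the set of basic positions:
`B_{i+1} = {q ∈ B_i | p_i ⋢ q} ∪ {p_i.q | q a non-variable position of r_i}`. -/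
def basicNext {Ω : Type*} {F : GradedSig Ω} (B : Set (List ℕ)) (st : NStep Ω F) :
    Set (List ℕ) :=
  {q ∈ B | ¬ st.pos <+: q} ∪ {p | ∃ q ∈ GTerm.FunPos st.rhs, p = st.pos ++ q}

/-- The derivation given by `steps` is basic with respect to the initial set `B` of basic
positions: each narrowing position belongs to the current set of basic positions. -/
def BasicFrom {Ω : Type*} {F : GradedSig Ω} : Set (List ℕ) → List (NStep Ω F) → Prop
  | _, [] => True
  | B, st :: l => st.pos ∈ B ∧ BasicFrom (basicNext B st) l

/-- Along the derivation, the set of basic positions of each intermediate term equals its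
set of non-variable positions. -/
def BasicEqFunPos {Ω : Type*} {F : GradedSig Ω} :
    Set (List ℕ) → GTerm F → List (NStep Ω F) → Prop
  | B, t, [] => B = GTerm.FunPos t
  | B, t, st :: l => B = GTerm.FunPos t ∧ BasicEqFunPos (basicNext B st) (nnext t st) l

/-- One graded narrowing step `t ⤳_{R,σ,∂_p(t)(ε)} (t[rρ]_p)σ`. -/
def Narrow {Ω : Type*} {F : GradedSig Ω} (R : Set (GTerm F × Ω × GTerm F))
    (σ : ℕ → GTerm F) (δ : Ω) (t s : GTerm F) : Prop :=
  ∃ st : NStep Ω F, StepOK R t st ∧ σ = st.mgu ∧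
    δ = GTerm.gradeAt t st.pos st.deg ∧ s = nnext t st

/-- Multi-step graded narrowing `t ⤳*_{R,σ,δ} s`: degrees compose by `⊗` and
substitutions by composition (with the identity substitution and `κ` for zero steps). -/
inductive NarrowStar {Ω : Type*} [Monoid Ω] {F : GradedSig Ω}
    (R : Set (GTerm F × Ω × GTerm F)) :
    (ℕ → GTerm F) → Ω → GTerm F → GTerm F → Prop
  | refl (t) : NarrowStar R GTerm.var 1 t t
  | step {σ₁ σ₂ : ℕ → GTerm F} {ε₁ ε₂ t u s} :
      Narrow R σ₁ ε₁ t u → NarrowStar R σ₂ ε₂ u s →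
      NarrowStar R (fun v => GTerm.subst σ₂ (σ₁ v)) (ε₁ * ε₂) t s

namespace GTerm

variable {Ω : Type*} {F : GradedSig Ω}

lemma subtermAt_append (t : GTerm F) (p q : List ℕ) :
    subtermAt t (p ++ q) = (subtermAt t p).bind (fun s => subtermAt s q) := by
  induction t generalizing p with
  | var v => cases p <;> simp [subtermAt]
  | app f args ih =>
    cases p with
    | nil => simp [subtermAt]
    | cons i p =>
      simp only [List.cons_append, subtermAt]
      split
      · exact ih _ p
      · simp

lemma mem_vars_iff {v : ℕ} {t : GTerm F} :
    v ∈ vars t ↔ ∃ p, subtermAt t p = some (var v) := by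
  induction t with
  | var w =>
    constructor
    · rintro rfl; exact ⟨[], rfl⟩
    · rintro ⟨p, hp⟩
      cases p with
      | nil => simp [subtermAt] at hp; cases hp; rfl
      | cons i p => simp [subtermAt] at hp
  | app f args ih =>
    simp only [vars, Set.mem_iUnion]
    constructor
    · rintro ⟨j, hj⟩
      obtain ⟨p, hp⟩ := (ih j).1 hj
      refine ⟨(j : ℕ) :: p, ?_⟩
      simp [subtermAt, j.isLt, hp]
    · rintro ⟨p, hp⟩
      cases p with
      | nil => simp [subtermAt] at hp
      | cons i p =>
        simp only [subtermAt] at hp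
        split at hp
        · exact ⟨_, (ih _).2 ⟨p, hp⟩⟩
        · simp at hp

lemma vars_subtermAt {t s : GTerm F} {p : List ℕ} (h : subtermAt t p = some s) :
    vars s ⊆ vars t := by
  intro v hv
  obtain ⟨q, hq⟩ := mem_vars_iff.1 hv
  refine mem_vars_iff.2 ⟨p ++ q, ?_⟩
  rw [subtermAt_append, h]; exact hq

lemma subst_congr {σ τ : ℕ → GTerm F} {t : GTerm F}
    (h : ∀ v ∈ vars t, σ v = τ v) : subst σ t = subst τ t := by
  induction t with
  | var v => exact h v rfl
  | app f args ih =>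
    simp only [subst]
    congr 1
    funext j
    exact ih j (fun v hv => h v (Set.mem_iUnion.2 ⟨j, hv⟩))

lemma vars_subst (σ : ℕ → GTerm F) (t : GTerm F) :
    vars (subst σ t) = ⋃ v ∈ vars t, vars (σ v) := by
  induction t with
  | var v => simp [subst, vars]
  | app f args ih =>
    simp only [subst, vars, ih]
    ext w
    simp only [Set.mem_iUnion]
    constructor
    · rintro ⟨j, v, hv, hw⟩; exact ⟨v, ⟨j, hv⟩, hw⟩
    · rintro ⟨v, ⟨j, hv⟩, hw⟩; exact ⟨j, v, hv, hw⟩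

lemma subtermAt_subst {σ : ℕ → GTerm F} {t : GTerm F}
    (h : ∀ v ∈ vars t, ∃ w, σ v = var w) (q : List ℕ) :
    subtermAt (subst σ t) q = Option.map (subst σ) (subtermAt t q) := by
  induction t generalizing q with
  | var v =>
    obtain ⟨w, hw⟩ := h v rfl
    cases q with
    | nil => simp [subtermAt, subst]
    | cons i q => simp [subtermAt, subst, hw]
  | app f args ih =>
    cases q with
    | nil => simp [subtermAt, subst]
    | cons i q =>
      simp only [subst, subtermAt]
      split
      · exact ih _ (fun v hv => h v (Set.mem_iUnion.2 ⟨_, hv⟩)) q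
      · simp

lemma subtermAt_replaceAt_prefix (t : GTerm F) {p : List ℕ} (q : List ℕ) (r : GTerm F)
    (h : (subtermAt t p).isSome) :
    subtermAt (replaceAt t p r) (p ++ q) = subtermAt r q := by
  induction t generalizing p with
  | var v =>
    cases p with
    | nil => simp [replaceAt]
    | cons i p => simp [subtermAt] at h
  | app f args ih =>
    cases p with
    | nil => simp [replaceAt]
    | cons i p =>
      simp only [subtermAt] at h
      split at h
      case isTrue hi =>
        simp only [replaceAt, List.cons_append, subtermAt, dif_pos hi]
        simpa using ih ⟨i, hi⟩ h
      case isFalse => simp at h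

lemma subtermAt_replaceAt_of_incomp (t : GTerm F) {p q : List ℕ} (r : GTerm F)
    (hq : ¬ p <+: q) (hp : ¬ q <+: p) :
    subtermAt (replaceAt t p r) q = subtermAt t q := by
  induction t generalizing p q with
  | var v =>
    cases p with
    | nil => exact absurd (List.nil_prefix) hq
    | cons i p => simp [replaceAt]
  | app f args ih =>
    cases p with
    | nil => exact absurd (List.nil_prefix) hq
    | cons i p =>
      cases q with
      | nil => exact absurd (List.nil_prefix) hp
      | cons j q =>
        simp only [replaceAt, subtermAt]
        split
        case isTrue hj =>
          by_cases hij : j = i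
          · subst hij
            simp only [if_pos rfl]
            exact ih _ (fun hh => hq (List.cons_prefix_cons.2 ⟨rfl, hh⟩)) (fun hh => hp (List.cons_prefix_cons.2 ⟨rfl, hh⟩))
          · simp [hij]
        case isFalse => rfl

lemma funPos_replaceAt_of_strict_prefix (t : GTerm F) {p q : List ℕ} (r : GTerm F)
    (h : (subtermAt t p).isSome) (hq : q <+: p) (hne : q ≠ p) :
    q ∈ FunPos t ∧ q ∈ FunPos (replaceAt t p r) := by
  induction t generalizing p q with
  | var v =>
    cases p with
    | nil => cases List.prefix_nil.1 hq; exact absurd rfl hne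
    | cons i p => simp [subtermAt] at h
  | app f args ih =>
    cases p with
    | nil => cases List.prefix_nil.1 hq; exact absurd rfl hne
    | cons i p =>
      cases q with
      | nil => exact ⟨⟨f, args, rfl⟩, ⟨f, _, rfl⟩⟩
      | cons j q =>
        obtain ⟨hji, hq'⟩ : j = i ∧ q <+: p := by
          obtain ⟨s, hs⟩ := hq
          injection hs with h1 h2
          exact ⟨h1, ⟨s, h2⟩⟩
        subst hji
        simp only [subtermAt] at h
        split at h
        case isTrue hi =>
          have hne' : q ≠ p := fun hh => hne (by rw [hh])
          obtain ⟨h1, h2⟩ := ih (⟨j, hi⟩ : Fin _) h hq' hne'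
          constructor
          · obtain ⟨g, as, hga⟩ := h1
            exact ⟨g, as, by simp [subtermAt, hi, hga]⟩
          · obtain ⟨g, as, hga⟩ := h2
            refine ⟨g, as, ?_⟩
            simp only [replaceAt, subtermAt, dif_pos hi]
            simpa using hga
        case isFalse => simp at h

lemma subtermAt_var_replaceAt {t r : GTerm F} {p q : List ℕ} {v : ℕ}
    (h : (subtermAt t p).isSome)
    (hv : subtermAt (replaceAt t p r) q = some (var v)) :
    (subtermAt t q = some (var v) ∧ ¬ p <+: q) ∨
      ∃ q', q = p ++ q' ∧ subtermAt r q' = some (var v) := by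
  by_cases hpq : p <+: q
  · obtain ⟨q', rfl⟩ := hpq
    right
    exact ⟨q', rfl, by rwa [subtermAt_replaceAt_prefix t q' r h] at hv⟩
  · by_cases hqp : q <+: p
    · have hne : q ≠ p := fun hh => hpq (hh ▸ List.prefix_refl q)
      obtain ⟨-, g, as, hga⟩ := funPos_replaceAt_of_strict_prefix t r h hqp hne
      rw [hga] at hv
      exact absurd hv (by simp)
    · left
      exact ⟨by rwa [subtermAt_replaceAt_of_incomp t r hpq hqp] at hv, hpq⟩

lemma mem_funPos_replaceAt {t r : GTerm F} {p : List ℕ} (h : (subtermAt t p).isSome)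
    (q : List ℕ) :
    q ∈ FunPos (replaceAt t p r) ↔
      (q ∈ FunPos t ∧ ¬ p <+: q) ∨ ∃ q', q = p ++ q' ∧ q' ∈ FunPos r := by
  by_cases hpq : p <+: q
  · obtain ⟨q', rfl⟩ := hpq
    constructor
    · rintro ⟨f, as, hfa⟩
      rw [subtermAt_replaceAt_prefix t q' r h] at hfa
      exact Or.inr ⟨q', rfl, f, as, hfa⟩
    · rintro (⟨-, hnp⟩ | ⟨q'', hq'', f, as, hfa⟩)
      · exact absurd ⟨q', rfl⟩ hnp
      · have : q'' = q' := (List.append_cancel_left hq'').symm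
        refine ⟨f, as, ?_⟩
        rw [subtermAt_replaceAt_prefix t q' r h, ← this]
        exact hfa
  · by_cases hqp : q <+: p
    · have hne : q ≠ p := fun hh => hpq (hh ▸ List.prefix_refl q)
      obtain ⟨h1, h2⟩ := funPos_replaceAt_of_strict_prefix t r h hqp hne
      constructor
      · intro _; exact Or.inl ⟨h1, hpq⟩
      · intro _; exact h2
    · have heq := subtermAt_replaceAt_of_incomp t r hpq hqp
      simp only [FunPos, Set.mem_setOf_eq, heq]
      constructor
      · intro hh; exact Or.inl ⟨hh, hpq⟩
      · rintro (⟨hh, -⟩ | ⟨q', rfl, -⟩)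
        · exact hh
        · exact absurd ⟨q', rfl⟩ hpq

lemma funPos_subst {σ : ℕ → GTerm F} {t : GTerm F}
    (h : ∀ v ∈ vars t, ∃ w, σ v = var w) :
    FunPos (subst σ t) = FunPos t := by
  ext q
  simp only [FunPos, Set.mem_setOf_eq, subtermAt_subst h q]
  constructor
  · rintro ⟨f, as, hfa⟩
    obtain ⟨w, hw, hw2⟩ := Option.map_eq_some_iff.1 hfa
    cases w with
    | var v =>
      obtain ⟨z, hz⟩ := h v (vars_subtermAt hw rfl)
      rw [subst, hz] at hw2
      exact absurd hw2 (by simp)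
    | app g as' => exact ⟨g, as', hw⟩
  · rintro ⟨f, as, hfa⟩
    exact ⟨f, fun j => subst σ (as j), by rw [hfa]; rfl⟩

lemma linear_subst {σ : ℕ → GTerm F} {t : GTerm F}
    (hlin : Linear t) (h : ∀ v ∈ vars t, ∃ w, σ v = var w)
    (hinj : ∀ v ∈ vars t, ∀ v' ∈ vars t, σ v = σ v' → v = v') :
    Linear (subst σ t) := by
  intro z p q hp hq
  rw [subtermAt_subst h] at hp hq
  obtain ⟨w, hw, hw2⟩ := Option.map_eq_some_iff.1 hp
  obtain ⟨w', hw', hw2'⟩ := Option.map_eq_some_iff.1 hq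
  obtain ⟨v, rfl⟩ : ∃ v, w = var v := by
    cases w with
    | var v => exact ⟨v, rfl⟩
    | app g as => exact absurd hw2 (by simp [subst])
  obtain ⟨v', rfl⟩ : ∃ v', w' = var v' := by
    cases w' with
    | var v => exact ⟨v, rfl⟩
    | app g as => exact absurd hw2' (by simp [subst])
  have hv : v ∈ vars t := vars_subtermAt hw rfl
  have hv' : v' ∈ vars t := vars_subtermAt hw' rfl
  have : v = v' := hinj v hv v' hv' (by rw [show σ v = subst σ (var v) from rfl, hw2,
    show σ v' = subst σ (var v') from rfl, hw2'])
  subst this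
  exact hlin v p q hw hw'

lemma linear_replaceAt {t r : GTerm F} {p : List ℕ}
    (hlin : Linear t) (hr : vars r = ∅) (h : (subtermAt t p).isSome) :
    Linear (replaceAt t p r) := by
  intro v q q' hq hq'
  have novar : ∀ q'', subtermAt r q'' ≠ some (var v) := by
    intro q'' hq''
    have : v ∈ vars r := mem_vars_iff.2 ⟨q'', hq''⟩
    rw [hr] at this; exact this
  rcases subtermAt_var_replaceAt h hq with ⟨h1, -⟩ | ⟨q'', -, hq''⟩
  · rcases subtermAt_var_replaceAt h hq' with ⟨h1', -⟩ | ⟨q''', -, hq'''⟩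
    · exact hlin v q q' h1 h1'
    · exact absurd hq''' (novar _)
  · exact absurd hq'' (novar _)

end GTerm

open GTerm Classical in
lemma step_key {Ω : Type*} {F : GradedSig Ω} {R : Set (GTerm F × Ω × GTerm F)}
    (hRG : ∀ l ε r, (l, ε, r) ∈ R → GTerm.vars r = ∅)
    {t : GTerm F} (hlin : t.Linear) {st : NStep Ω F} (hst : StepOK R t st) :
    GTerm.FunPos (nnext t st) = basicNext (GTerm.FunPos t) st ∧ (nnext t st).Linear := by
  obtain ⟨hpos, ⟨l₀, r₀, π, hπ, hrule, hl, hr, hdisj⟩, u, hu, hmgu⟩ := hst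
  -- the right-hand side is ground
  have hrg : vars st.rhs = ∅ := by
    rw [hr, vars_subst, hRG _ _ _ hrule]
    simp
  have hsome : (subtermAt t st.pos).isSome := by rw [hu]; rfl
  set σ := st.mgu with hσ
  -- an mgu maps variables outside the unified terms to variables, injectively
  set τ : ℕ → GTerm F :=
    fun x => if x ∈ vars u ∪ vars st.lhs then σ x else var x with hτdef
  have hτu : IsUnifier τ u st.lhs := by
    have h1 : subst τ u = subst σ u :=
      subst_congr (fun v hv => by simp [hτdef, Set.mem_union, hv])
    have h2 : subst τ st.lhs = subst σ st.lhs :=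
      subst_congr (fun v hv => by simp [hτdef, Set.mem_union, hv])
    rw [IsUnifier, h1, h2]
    exact hmgu.1
  obtain ⟨ρ, hρ⟩ := hmgu.2 τ hτu
  have hout : ∀ v, v ∉ vars u → v ∉ vars st.lhs →
      ∃ w, σ v = var w ∧ ρ w = var v := by
    intro v hvu hvl
    have h1 : subst ρ (σ v) = var v := by
      rw [hρ v, hτdef]
      simp [Set.mem_union, hvu, hvl]
    cases hσv : σ v with
    | var w =>
      rw [hσv] at h1
      exact ⟨w, rfl, h1⟩
    | app g as =>
      rw [hσv] at h1
      exact absurd h1 (by simp [subst])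
  set s : GTerm F := replaceAt t st.pos st.rhs with hs
  -- variables of s = t[rhs]_p are variables of t outside u and lhs
  have hvars_s : ∀ v ∈ vars s, v ∉ vars u ∧ v ∉ vars st.lhs := by
    intro v hv
    obtain ⟨q, hq⟩ := mem_vars_iff.1 hv
    rcases subtermAt_var_replaceAt hsome hq with ⟨h1, hnp⟩ | ⟨q', -, hq'⟩
    · have hvt : v ∈ vars t := mem_vars_iff.2 ⟨q, h1⟩
      have hvl : v ∉ vars st.lhs := by
        intro hvl
        have : v ∈ (vars st.lhs ∪ vars st.rhs) ∩ vars t := ⟨Or.inl hvl, hvt⟩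
        rw [hdisj] at this
        exact this
      refine ⟨?_, hvl⟩
      intro hvu
      obtain ⟨qu, hqu⟩ := mem_vars_iff.1 hvu
      have h2 : subtermAt t (st.pos ++ qu) = some (var v) := by
        rw [subtermAt_append, hu]
        exact hqu
      exact hnp (hlin v q (st.pos ++ qu) h1 h2 ▸ ⟨qu, rfl⟩)
    · have : v ∈ vars st.rhs := mem_vars_iff.2 ⟨q', hq'⟩
      rw [hrg] at this
      exact this.elim
  have hσvar : ∀ v ∈ vars s, ∃ w, σ v = var w := by
    intro v hv
    obtain ⟨w, hw, -⟩ := hout v (hvars_s v hv).1 (hvars_s v hv).2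
    exact ⟨w, hw⟩
  have hσinj : ∀ v ∈ vars s, ∀ v' ∈ vars s, σ v = σ v' → v = v' := by
    intro v hv v' hv' hσvv
    obtain ⟨w, hw, hwρ⟩ := hout v (hvars_s v hv).1 (hvars_s v hv).2
    obtain ⟨w', hw', hwρ'⟩ := hout v' (hvars_s v' hv').1 (hvars_s v' hv').2
    rw [hw, hw'] at hσvv
    injection hσvv with hww
    subst hww
    rw [hwρ] at hwρ'
    injection hwρ'
  have hlins : Linear s := linear_replaceAt hlin hrg hsome
  constructor
  · have h1 : FunPos (nnext t st) = FunPos s := funPos_subst hσvar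
    rw [h1]
    ext q
    rw [mem_funPos_replaceAt hsome q]
    simp only [basicNext, Set.mem_union, Set.mem_setOf_eq, Set.mem_sep_iff]
    constructor
    · rintro (⟨h1, h2⟩ | ⟨q', rfl, hq'⟩)
      · exact Or.inl ⟨h1, h2⟩
      · exact Or.inr ⟨q', hq', rfl⟩
    · rintro (⟨h1, h2⟩ | ⟨q', hq', rfl⟩)
      · exact Or.inl ⟨h1, h2⟩
      · exact Or.inr ⟨q', rfl, hq'⟩
  · exact linear_subst hlins hσvar hσinj

/-- If `t` is a linear term and `R` is a right-ground `(Ω,Φ)`-TRS (all right-hand sides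
of rules are ground), then every narrowing derivation starting from `t` is basic;
equivalently, for every term `tᵢ` in the derivation, the set of basic positions of `tᵢ`
equals its set of non-variable positions. -/
theorem linear_rightground_narrowing_basic {Ω : Type*} [CommMonoid Ω] [CompleteLattice Ω]
    [IsQuantale Ω] (hΩ : Lawverean Ω) {F : GradedSig Ω} (hF : F.IsCBESig)
    (R : Set (GTerm F × Ω × GTerm F)) (hR : IsTRS R)
    (hRG : ∀ l ε r, (l, ε, r) ∈ R → GTerm.vars r = ∅)
    {t : GTerm F} (hlin : t.Linear) (steps : List (NStep Ω F))
    (h : ValidDeriv R t steps) :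
    BasicFrom (GTerm.FunPos t) steps ∧ BasicEqFunPos (GTerm.FunPos t) t steps := by
  induction steps generalizing t with
  | nil => exact ⟨trivial, rfl⟩
  | cons st l ih =>
    obtain ⟨hst, hrest⟩ := h
    obtain ⟨heq, hlin'⟩ := step_key hRG hlin hst
    obtain ⟨bf, beq⟩ := ih hlin' hrest
    refine ⟨⟨hst.1, ?_⟩, rfl, ?_⟩
    · rw [heq] at bf; exact bf
    · rw [heq] at beq; exact beq
end
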